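/- Let P be a bounded poset of finite length such that any two distinct elements covering a common element have a join. Then P is a lattice. -/

import Mathlib

private lemma no_increasing_seq {P : Type*} [Preorder P] {N : ℕ}
    (hN : ∀ l : List P, l.Chain' (· < ·) → l.length ≤ N)
    (f : ℕ → P) (hf : ∀ n, f n < f (n + 1)) : False := by
  have hc : ((List.range (N + 1)).map f).Chain' (· < ·) := by
    show List.IsChain _ _
    rw [List.isChain_map, List.isChain_range_succ]
    exact fun m _ => hf m
  have := hN _ hc
  simp at this

private lemma no_decreasing_seq {P : Type*} [Preorder P] {N : ℕ}
    (hN : ∀ l : List P, l.Chain' (· < ·) → l.length ≤ N)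
    (f : ℕ → P) (hf : ∀ n, f (n + 1) < f n) : False := by
  have hc : ((List.range (N + 1)).map f).reverse.Chain' (· < ·) := by
    show List.IsChain _ _
    rw [List.isChain_reverse, List.isChain_map, List.isChain_range_succ]
    exact fun m _ => hf m
  have := hN _ hc
  simp at this

private lemma wf_lt_of_bound {P : Type*} [Preorder P] {N : ℕ}
    (hN : ∀ l : List P, l.Chain' (· < ·) → l.length ≤ N) :
    WellFounded ((· < ·) : P → P → Prop) := by
  rw [RelEmbedding.wellFounded_iff_isEmpty]
  constructor
  intro f
  exact no_decreasing_seq hN f.toFun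
    (fun n => f.map_rel_iff.mpr (show n + 1 > n from Nat.lt_succ_self n))

private lemma wf_gt_of_bound {P : Type*} [Preorder P] {N : ℕ}
    (hN : ∀ l : List P, l.Chain' (· < ·) → l.length ≤ N) :
    WellFounded (fun x y : P => y < x) := by
  rw [RelEmbedding.wellFounded_iff_isEmpty]
  constructor
  intro f
  exact no_increasing_seq hN f.toFun
    (fun n => f.map_rel_iff.mpr (show n + 1 > n from Nat.lt_succ_self n))

private lemma isLUB_pair_left {P : Type*} [PartialOrder P] {a b : P} (hab : a ≤ b) :
    IsLUB {a, b} b :=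
  ⟨by rintro x (rfl | rfl) <;> [exact hab; exact le_rfl], fun u hu => hu (by simp)⟩

/-- **Lemma 2.1 of [BEZ90].** A bounded poset of finite length in which any two distinct
elements covering a common element have a join is a lattice. -/
theorem lattice_of_covers_have_joins {P : Type*} [PartialOrder P] [BoundedOrder P]
    (hfin : ∃ N : ℕ, ∀ l : List P, l.Chain' (· < ·) → l.length ≤ N)
    (hcov : ∀ p a b : P, p ⋖ a → p ⋖ b → a ≠ b → ∃ j, IsLUB {a, b} j) :
    ∀ a b : P, (∃ j, IsLUB {a, b} j) ∧ (∃ m, IsGLB {a, b} m) := by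
  obtain ⟨N, hN⟩ := hfin
  have wflt := wf_lt_of_bound hN
  have wfgt := wf_gt_of_bound hN
  -- existence of a cover between p and a when p < a
  have hcover : ∀ p a : P, p < a → ∃ a', p ⋖ a' ∧ a' ≤ a := by
    intro p a hpa
    obtain ⟨a', ⟨hpa', ha'a⟩, hmin⟩ := wflt.has_min {x | p < x ∧ x ≤ a} ⟨a, hpa, le_rfl⟩
    exact ⟨a', ⟨hpa', fun z hz1 hz2 => hmin z ⟨hz1, hz2.le.trans ha'a⟩ hz2⟩, ha'a⟩
  -- all joins exist
  have hjoin : ∀ a b : P, ∃ j, IsLUB {a, b} j := by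
    have key : ∀ p : P, ∀ a b : P, p ≤ a → p ≤ b → ∃ j, IsLUB {a, b} j := by
      intro p
      induction p using wfgt.induction with
      | _ p IH =>
        intro a b hpa hpb
        by_cases hab : a ≤ b
        · exact ⟨b, isLUB_pair_left hab⟩
        by_cases hba : b ≤ a
        · exact ⟨a, by rw [Set.pair_comm]; exact isLUB_pair_left hba⟩
        have hpa' : p < a := lt_of_le_of_ne hpa (by rintro rfl; exact hab hpb)
        have hpb' : p < b := lt_of_le_of_ne hpb (by rintro rfl; exact hba hpa)
        obtain ⟨a', hca, ha'a⟩ := hcover p a hpa'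
        obtain ⟨b', hcb, hb'b⟩ := hcover p b hpb'
        by_cases heq : a' = b'
        · exact IH a' hca.lt a b ha'a (heq ▸ hb'b)
        · obtain ⟨j0, hj0⟩ := hcov p a' b' hca hcb heq
          have ha'j0 : a' ≤ j0 := hj0.1 (by simp)
          have hb'j0 : b' ≤ j0 := hj0.1 (by simp)
          obtain ⟨j1, hj1⟩ := IH a' hca.lt a j0 ha'a ha'j0
          have haj1 : a ≤ j1 := hj1.1 (by simp)
          have hj0j1 : j0 ≤ j1 := hj1.1 (by simp)
          obtain ⟨j2, hj2⟩ := IH b' hcb.lt j1 b (hb'j0.trans hj0j1) hb'b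
          have hj1j2 : j1 ≤ j2 := hj2.1 (by simp)
          have hbj2 : b ≤ j2 := hj2.1 (by simp)
          refine ⟨j2, ?_, ?_⟩
          · rintro x (rfl | rfl)
            · exact haj1.trans hj1j2
            · exact hbj2
          · intro u hu
            have hua : a ≤ u := hu (by simp)
            have hub : b ≤ u := hu (by simp)
            have huj0 : j0 ≤ u := hj0.2 (by
              rintro x (rfl | rfl)
              exacts [ha'a.trans hua, hb'b.trans hub])
            have huj1 : j1 ≤ u := hj1.2 (by rintro x (rfl | rfl); exacts [hua, huj0])
            exact hj2.2 (by rintro x (rfl | rfl); exacts [huj1, hub])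
    intro a b
    exact key ⊥ a b bot_le bot_le
  refine fun a b => ⟨hjoin a b, ?_⟩
  -- meets: take a maximal lower bound
  obtain ⟨m, hmL, hmax⟩ := wfgt.has_min (lowerBounds {a, b})
    ⟨⊥, by rintro x (rfl | rfl) <;> exact bot_le⟩
  refine ⟨m, hmL, ?_⟩
  intro x hx
  obtain ⟨j, hj⟩ := hjoin x m
  have hjL : j ∈ lowerBounds {a, b} := by
    rintro y (rfl | rfl)
    · exact hj.2 (by rintro z (rfl | rfl); exacts [hx (by simp), hmL (by simp)])
    · exact hj.2 (by rintro z (rfl | rfl); exacts [hx (by simp), hmL (by simp)])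
  have hmj : m ≤ j := hj.1 (by simp)
  have : j = m := le_antisymm (by by_contra h; exact hmax j hjL (lt_of_le_not_ge hmj h)) hmj
  exact this ▸ hj.1 (by simp)
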